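/- Let Y ∈ sp(4) be nonzero with det(Y) = 0. Then Y³ + (½‖Y‖_F²)·Y = 0. -/

import Mathlib

open Matrix

set_option maxHeartbeats 4000000 in
theorem sp4_aux (Y : Matrix (Fin 2 ⊕ Fin 2) (Fin 2 ⊕ Fin 2) ℂ)
    (h1 : ∀ i j, Y (Sum.inr i) (Sum.inr j) = -Y (Sum.inl j) (Sum.inl i))
    (h2 : Y (Sum.inl 1) (Sum.inr 0) = Y (Sum.inl 0) (Sum.inr 1))
    (h3 : Y (Sum.inr 1) (Sum.inl 0) = Y (Sum.inr 0) (Sum.inl 1))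
    (hdet : Y.det = 0) :
    Y * Y * Y * Y + (-(1/2 : ℂ) * (Y * Y).trace) • (Y * Y) = 0 := by
  let e : Fin 4 ≃ (Fin 2 ⊕ Fin 2) :=
    ⟨![Sum.inl 0, Sum.inl 1, Sum.inr 0, Sum.inr 1],
     Sum.elim ![0,1] ![2,3], by decide, by decide⟩
  rw [← Matrix.det_submatrix_equiv_self e Y] at hdet
  simp only [Matrix.det_succ_row_zero, Fin.sum_univ_succ] at hdet
  unfold Matrix.submatrix at hdet
  norm_num [Matrix.submatrix_apply, Fin.succAbove, Fin.lt_def, Fin.le_def, e,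
    Matrix.det_fin_one, (show (Fin.castSucc 2 : Fin 4) = 2 from rfl)] at hdet
  simp [Fin.ext_iff, Matrix.cons_val] at hdet
  simp only [h1, h2, h3] at hdet
  ext i j
  simp only [Matrix.add_apply, Matrix.smul_apply, Matrix.mul_apply,
    Fintype.sum_sum_type, Fin.sum_univ_two, Matrix.zero_apply, smul_eq_mul,
    Matrix.trace, Matrix.diag]
  rcases i with i | i <;> rcases j with j | j <;> fin_cases i <;> fin_cases j <;>
    simp only [Fin.mk_zero, Fin.mk_one, Fin.zero_eta, Fin.mk_one, h1, h2, h3] <;>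
    first
      | linear_combination hdet
      | linear_combination -hdet
      | ring

theorem cubic_minpoly_sp4
    (Y : Matrix (Fin 2 ⊕ Fin 2) (Fin 2 ⊕ Fin 2) ℂ)
    (J : Matrix (Fin 2 ⊕ Fin 2) (Fin 2 ⊕ Fin 2) ℂ)
    (hJ : J = fromBlocks 0 1 (-1) 0)
    (hanti : Yᴴ = -Y) (hsymp : Yᵀ * J = -(J * Y))
    (hY : Y ≠ 0) (hdet : Y.det = 0) :
    Y ^ 3 + ((1 / 2 : ℂ) * (Yᴴ * Y).trace) • Y = 0 := by
  open scoped ComplexOrder in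
  subst hJ
  have hs : ∀ i j, (Yᵀ * fromBlocks 0 1 (-1) 0 : Matrix (Fin 2 ⊕ Fin 2) (Fin 2 ⊕ Fin 2) ℂ) i j
      = (-(fromBlocks 0 1 (-1) 0 * Y) : Matrix (Fin 2 ⊕ Fin 2) (Fin 2 ⊕ Fin 2) ℂ) i j :=
    fun i j => congrFun (congrFun hsymp i) j
  have h1 : ∀ i j, Y (Sum.inr i) (Sum.inr j) = -Y (Sum.inl j) (Sum.inl i) := by
    intro i j
    have h := hs (Sum.inl i) (Sum.inr j)
    fin_cases i <;> fin_cases j <;>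
      (simp only [Fin.mk_zero, Fin.mk_one, Fin.zero_eta];
       simp [Matrix.mul_apply, Fintype.sum_sum_type, Fin.sum_univ_two,
         Matrix.one_apply, Matrix.transpose_apply, Fin.mk_zero, Fin.mk_one] at h;
       first | linear_combination h | linear_combination -h)
  have h2 : Y (Sum.inl 1) (Sum.inr 0) = Y (Sum.inl 0) (Sum.inr 1) := by
    have h := hs (Sum.inr 0) (Sum.inr 1)
    simp [Matrix.mul_apply, Fintype.sum_sum_type, Fin.sum_univ_two,
      Matrix.one_apply, Matrix.transpose_apply] at h
    first | linear_combination h | linear_combination -h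
  have h3 : Y (Sum.inr 1) (Sum.inl 0) = Y (Sum.inr 0) (Sum.inl 1) := by
    have h := hs (Sum.inl 0) (Sum.inl 1)
    simp [Matrix.mul_apply, Fintype.sum_sum_type, Fin.sum_univ_two,
      Matrix.one_apply, Matrix.transpose_apply] at h
    first | linear_combination h | linear_combination -h
  set c : ℂ := (1 / 2 : ℂ) * (Yᴴ * Y).trace with hc
  have hc2 : c = -(1/2 : ℂ) * (Y * Y).trace := by
    rw [hc, hanti, Matrix.neg_mul, Matrix.trace_neg]; ring
  have haux := sp4_aux Y h1 h2 h3 hdet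
  have hkey : Y ^ 4 + c • Y ^ 2 = 0 := by
    rw [hc2, show Y ^ 4 = Y * Y * Y * Y by rw [pow_succ, pow_succ, pow_two], show Y ^ 2 = Y * Y from pow_two Y]
    exact haux
  have h4 : Y ^ 4 = -(c • Y ^ 2) := eq_neg_of_add_eq_zero_left hkey
  have h6 : Y ^ 6 = (c * c) • Y ^ 2 := by
    have e : Y ^ 6 = Y ^ 2 * Y ^ 4 := by rw [show (6:ℕ) = 2 + 4 from rfl, pow_add]
    rw [e, h4, Matrix.mul_neg, mul_smul_comm, ← pow_add, h4, smul_neg, neg_neg, smul_smul]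
  have hstar : star c = c := by
    rw [hc]
    have : star ((Yᴴ * Y).trace) = (Yᴴ * Y).trace := by
      rw [← Matrix.trace_conjTranspose, Matrix.conjTranspose_mul,
        Matrix.conjTranspose_conjTranspose]
    simp [this]
  have hZconj : (Y ^ 3 + c • Y)ᴴ = -(Y ^ 3 + c • Y) := by
    rw [Matrix.conjTranspose_add, Matrix.conjTranspose_smul, Matrix.conjTranspose_pow,
      hanti, hstar, Odd.neg_pow (⟨1, by norm_num⟩ : Odd 3), smul_neg, neg_add]
  have hZZ : (Y ^ 3 + c • Y) * (Y ^ 3 + c • Y) = 0 := by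
    have expand : (Y ^ 3 + c • Y) * (Y ^ 3 + c • Y)
        = Y ^ 6 + c • Y ^ 4 + (c • Y ^ 4 + (c * c) • Y ^ 2) := by
      rw [add_mul, mul_add, mul_add, mul_smul_comm, mul_smul_comm, smul_mul_assoc,
        smul_mul_assoc, smul_smul, ← pow_add, ← pow_succ, ← pow_succ']
      norm_num [← pow_two]
    rw [expand, h6, h4]
    simp [smul_smul]
    try abel
  have hZ : Y ^ 3 + c • Y = 0 := by
    apply Matrix.conjTranspose_mul_self_eq_zero.mp
    rw [hZconj, Matrix.neg_mul, hZZ, neg_zero]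
  exact hZ
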